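/- Let μ be a Borel probability measure on a compact set K ⊆ ℝ^d, ν = ∑_{i=1}^N ν_i δ_{y_i} a finitely supported probability measure, and ψ ∈ ℝ^N with μ(Lag_i(ψ)) = ν_i for all i and μ(Lag_i(ψ) ∩ Lag_j(ψ)) = 0 for all i ≠ j. Then the map T_ψ(x) = argmin_i (‖x - y_i‖² + ψ_i) (defined μ-a.e.) satisfies: for every measurable T : K → {y_1,…,y_N} with μ(T^{-1}(y_i)) = ν_i for all i, ∫_K ‖x - T_ψ(x)‖² dμ(x) ≤ ∫_K ‖x - T(x)‖² dμ(x). -/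

import Mathlib

open MeasureTheory

/-- The `i`-th Laguerre cell of the weighted point cloud `(y, ψ)` on `K`. -/
def LaguerreCell {d N : ℕ} (K : Set (EuclideanSpace ℝ (Fin d)))
    (y : Fin N → EuclideanSpace ℝ (Fin d)) (ψ : Fin N → ℝ) (i : Fin N) :
    Set (EuclideanSpace ℝ (Fin d)) :=
  {x ∈ K | ∀ j, ‖x - y i‖ ^ 2 + ψ i ≤ ‖x - y j‖ ^ 2 + ψ j}

/-- if `ψ` solves the discrete Monge–Ampère system `μ(Lag_i ψ) = ν_i` and the
Laguerre cells pairwise overlap on `μ`-null sets, then the map `T_ψ` (sending the points of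
`Lag_i ψ` that are in no other cell to `y i`) minimizes the quadratic transport cost among all
measurable maps `T : K → {y_1, …, y_N}` with `μ(T⁻¹(y_i)) = ν_i`. -/
theorem laguerre_map_optimal {d N : ℕ}
    (K : Set (EuclideanSpace ℝ (Fin d))) (hK : IsCompact K)
    (μ : Measure (EuclideanSpace ℝ (Fin d))) [IsProbabilityMeasure μ] (hμK : μ K = 1)
    (y : Fin N → EuclideanSpace ℝ (Fin d)) (hy : Function.Injective y)
    (ν : Fin N → ℝ) (ψ : Fin N → ℝ)
    (hmass : ∀ i, (μ (LaguerreCell K y ψ i)).toReal = ν i)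
    (hover : ∀ i j, i ≠ j → μ (LaguerreCell K y ψ i ∩ LaguerreCell K y ψ j) = 0)
    (Tψ : EuclideanSpace ℝ (Fin d) → EuclideanSpace ℝ (Fin d)) (hTψmeas : Measurable Tψ)
    (hTψ : ∀ i, ∀ x ∈ LaguerreCell K y ψ i \ ⋃ (j) (_ : j ≠ i), LaguerreCell K y ψ j,
      Tψ x = y i)
    (T : EuclideanSpace ℝ (Fin d) → EuclideanSpace ℝ (Fin d)) (hTmeas : Measurable T)
    (hTY : ∀ x ∈ K, ∃ i, T x = y i)
    (hT : ∀ i, (μ (K ∩ T ⁻¹' {y i})).toReal = ν i) :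
    ∫ x in K, ‖x - Tψ x‖ ^ 2 ∂μ ≤ ∫ x in K, ‖x - T x‖ ^ 2 ∂μ := by
  classical
  have hKm : MeasurableSet K := hK.isClosed.measurableSet
  -- Laguerre cells are closed, hence measurable
  have hLclosed : ∀ i, IsClosed (LaguerreCell K y ψ i) := by
    intro i
    have heq : LaguerreCell K y ψ i =
        K ∩ ⋂ j, {x | ‖x - y i‖ ^ 2 + ψ i ≤ ‖x - y j‖ ^ 2 + ψ j} := by
      ext x; simp [LaguerreCell, Set.mem_iInter]
    rw [heq]
    refine hK.isClosed.inter (isClosed_iInter fun j => isClosed_le ?_ ?_)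
    · exact (((continuous_id.sub continuous_const).norm.pow 2).add continuous_const)
    · exact (((continuous_id.sub continuous_const).norm.pow 2).add continuous_const)
  have hLm : ∀ i, MeasurableSet (LaguerreCell K y ψ i) :=
    fun i => (hLclosed i).measurableSet
  have hLsubK : ∀ i, LaguerreCell K y ψ i ⊆ K := fun i x hx => hx.1
  -- the "pure" cells
  set A : Fin N → Set (EuclideanSpace ℝ (Fin d)) :=
    fun i => LaguerreCell K y ψ i \ ⋃ (j) (_ : j ≠ i), LaguerreCell K y ψ j with hA
  have hAm : ∀ i, MeasurableSet (A i) := fun i =>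
    (hLm i).diff (MeasurableSet.iUnion fun j => MeasurableSet.iUnion fun _ => hLm j)
  have hAsubL : ∀ i, A i ⊆ LaguerreCell K y ψ i := fun i => Set.diff_subset
  have hAsubK : ∀ i, A i ⊆ K := fun i => (hAsubL i).trans (hLsubK i)
  have hAdisj : Pairwise (Function.onFun Disjoint A) := by
    intro i j hij
    refine Set.disjoint_left.2 fun x hxi hxj => ?_
    exact hxi.2 (Set.mem_iUnion.2 ⟨j, Set.mem_iUnion.2 ⟨hij.symm, hxj.1⟩⟩)
  -- μ (A i) = μ (Lag i)
  have hμA : ∀ i, μ (A i) = μ (LaguerreCell K y ψ i) := by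
    intro i
    have hnull : μ (LaguerreCell K y ψ i ∩ ⋃ (j) (_ : j ≠ i), LaguerreCell K y ψ j) = 0 := by
      rw [Set.inter_iUnion₂]
      refine measure_iUnion_null fun j => measure_iUnion_null fun hji => hover i j (Ne.symm hji)
    refine le_antisymm (measure_mono Set.diff_subset) ?_
    calc μ (LaguerreCell K y ψ i)
        ≤ μ (A i ∪ (LaguerreCell K y ψ i ∩ ⋃ (j) (_ : j ≠ i), LaguerreCell K y ψ j)) := by
          refine measure_mono fun x hx => ?_
          by_cases h : x ∈ ⋃ (j) (_ : j ≠ i), LaguerreCell K y ψ j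
          · exact Or.inr ⟨hx, h⟩
          · exact Or.inl ⟨hx, h⟩
      _ ≤ μ (A i) + μ (LaguerreCell K y ψ i ∩ ⋃ (j) (_ : j ≠ i), LaguerreCell K y ψ j) :=
          measure_union_le _ _
      _ = μ (A i) := by rw [hnull, add_zero]
  -- μ (Lag i) = μ (K ∩ T⁻¹ {y i})
  have hLT : ∀ i, μ (LaguerreCell K y ψ i) = μ (K ∩ T ⁻¹' {y i}) := by
    intro i
    have h1 := hmass i
    have h2 := hT i
    have := h1.trans h2.symm
    exact (ENNReal.toReal_eq_toReal_iff' (measure_ne_top μ _) (measure_ne_top μ _)).1 this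
  -- ∑ μ (K ∩ T⁻¹ {y i}) = μ K
  have hTm : ∀ i, MeasurableSet (K ∩ T ⁻¹' {y i}) :=
    fun i => hKm.inter (hTmeas (measurableSet_singleton _))
  have hKunion : K = ⋃ i, K ∩ T ⁻¹' {y i} := by
    ext x
    constructor
    · intro hx
      obtain ⟨i, hi⟩ := hTY x hx
      exact Set.mem_iUnion.2 ⟨i, hx, hi⟩
    · rintro hx
      obtain ⟨i, hi⟩ := Set.mem_iUnion.1 hx
      exact hi.1
  have hsumK : ∑ i, μ (K ∩ T ⁻¹' {y i}) = μ K := by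
    have hdisj : Pairwise (Function.onFun Disjoint fun i => K ∩ T ⁻¹' {y i}) := by
      intro i j hij
      refine Set.disjoint_left.2 fun x hxi hxj => ?_
      exact hij (hy (hxi.2.symm.trans hxj.2))
    have hK' : μ K = μ (⋃ i, K ∩ T ⁻¹' {y i}) := by rw [← hKunion]
    rw [hK', measure_iUnion hdisj hTm, tsum_fintype]
  -- the union G of pure cells fills K up to measure zero
  set G : Set (EuclideanSpace ℝ (Fin d)) := ⋃ i, A i with hG
  have hGm : MeasurableSet G := MeasurableSet.iUnion hAm
  have hGsubK : G ⊆ K := Set.iUnion_subset hAsubK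
  have hμG : μ G = μ K := by
    rw [hG, measure_iUnion hAdisj hAm, tsum_fintype]
    calc ∑ i, μ (A i) = ∑ i, μ (K ∩ T ⁻¹' {y i}) := by
          refine Finset.sum_congr rfl fun i _ => ?_
          rw [hμA i, hLT i]
      _ = μ K := hsumK
  have hKG : μ (K \ G) = 0 := by
    rw [measure_diff hGsubK hGm.nullMeasurableSet (measure_ne_top μ _), hμG, tsub_self]
  -- the potential
  set φ : EuclideanSpace ℝ (Fin d) → ℝ := fun z => ∑ i, if z = y i then ψ i else 0 with hφdef
  have hφ : ∀ i, φ (y i) = ψ i := by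
    intro i
    simp only [hφdef, hy.eq_iff]
    rw [Finset.sum_ite_eq Finset.univ i ψ]
    simp
  have hφmeas : Measurable φ := by
    refine Finset.measurable_sum _ fun i _ => Measurable.ite ?_ measurable_const measurable_const
    have : {z : EuclideanSpace ℝ (Fin d) | z = y i} = {y i} := Set.setOf_eq_eq_singleton
    rw [this]; exact measurableSet_singleton _
  set Cψ : ℝ := ∑ i, |ψ i| with hCψ
  have hφbd : ∀ z, |φ z| ≤ Cψ := by
    intro z
    refine (Finset.abs_sum_le_sum_abs _ _).trans (Finset.sum_le_sum fun i _ => ?_)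
    split <;> simp
  -- bounds
  obtain ⟨r, hr⟩ := hK.isBounded.subset_closedBall 0
  obtain ⟨M, hM⟩ : ∃ M, ∀ i, ‖y i‖ ≤ M := Finite.exists_le _
  have hbound : ∀ x ∈ K, ∀ i, ‖x - y i‖ ^ 2 ≤ (r + M) ^ 2 := by
    intro x hx i
    have hxr : ‖x‖ ≤ r := mem_closedBall_zero_iff.1 (hr hx)
    have : ‖x - y i‖ ≤ r + M :=
      (norm_sub_le _ _).trans (add_le_add hxr (hM i))
    exact pow_le_pow_left₀ (norm_nonneg _) this 2
  -- a.e. facts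
  have haeK : ∀ᵐ x ∂μ.restrict K, x ∈ K := ae_restrict_mem hKm
  have haeG : ∀ᵐ x ∂μ.restrict K, ∃ i, x ∈ A i := by
    rw [ae_iff]
    have hset : {x | ¬ ∃ i, x ∈ A i} = Gᶜ := by
      ext x; simp [hG, Set.mem_iUnion]
    rw [hset, Measure.restrict_apply hGm.compl]
    have : Gᶜ ∩ K = K \ G := by rw [Set.diff_eq, Set.inter_comm]
    rw [this, hKG]
  -- integrability
  have hmeas1 : Measurable fun x => ‖x - Tψ x‖ ^ 2 :=
    ((measurable_id.sub hTψmeas).norm.pow_const 2)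
  have hmeas2 : Measurable fun x => ‖x - T x‖ ^ 2 :=
    ((measurable_id.sub hTmeas).norm.pow_const 2)
  have hInt1 : Integrable (fun x => ‖x - Tψ x‖ ^ 2) (μ.restrict K) := by
    refine Integrable.mono' (integrable_const ((r + M) ^ 2)) hmeas1.aestronglyMeasurable ?_
    filter_upwards [haeK, haeG] with x hxK hxG
    obtain ⟨i, hxA⟩ := hxG
    rw [hTψ i x hxA, Real.norm_eq_abs, abs_of_nonneg (by positivity)]
    exact hbound x hxK i
  have hInt2 : Integrable (fun x => ‖x - T x‖ ^ 2) (μ.restrict K) := by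
    refine Integrable.mono' (integrable_const ((r + M) ^ 2)) hmeas2.aestronglyMeasurable ?_
    filter_upwards [haeK] with x hxK
    obtain ⟨j, hj⟩ := hTY x hxK
    rw [hj, Real.norm_eq_abs, abs_of_nonneg (by positivity)]
    exact hbound x hxK j
  have hInt3 : Integrable (fun x => φ (Tψ x)) (μ.restrict K) := by
    refine Integrable.mono' (integrable_const Cψ)
      (hφmeas.comp hTψmeas).aestronglyMeasurable ?_
    exact Filter.Eventually.of_forall fun x => by rw [Real.norm_eq_abs]; exact hφbd _
  have hInt4 : Integrable (fun x => φ (T x)) (μ.restrict K) := by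
    refine Integrable.mono' (integrable_const Cψ)
      (hφmeas.comp hTmeas).aestronglyMeasurable ?_
    exact Filter.Eventually.of_forall fun x => by rw [Real.norm_eq_abs]; exact hφbd _
  -- main a.e. inequality
  have hmain : ∀ᵐ x ∂μ.restrict K,
      ‖x - Tψ x‖ ^ 2 + φ (Tψ x) ≤ ‖x - T x‖ ^ 2 + φ (T x) := by
    filter_upwards [haeK, haeG] with x hxK hxG
    obtain ⟨i, hxA⟩ := hxG
    obtain ⟨j, hj⟩ := hTY x hxK
    rw [hTψ i x hxA, hj, hφ, hφ]
    exact hxA.1.2 j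
  have hle : ∫ x in K, (‖x - Tψ x‖ ^ 2 + φ (Tψ x)) ∂μ
      ≤ ∫ x in K, (‖x - T x‖ ^ 2 + φ (T x)) ∂μ :=
    integral_mono_ae (hInt1.add hInt3) (hInt2.add hInt4) hmain
  rw [integral_add hInt1 hInt3, integral_add hInt2 hInt4] at hle
  -- compute the two potential integrals
  have hIT : ∫ x in K, φ (T x) ∂μ = ∑ i, ψ i * ν i := by
    have : ∀ x, φ (T x) = ∑ i, Set.indicator (T ⁻¹' {y i}) (fun _ => ψ i) x := by
      intro x
      refine Finset.sum_congr rfl fun i _ => ?_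
      by_cases h : T x = y i
      · simp [hφdef, Set.indicator, h]
      · simp [hφdef, Set.indicator, h]
    calc ∫ x in K, φ (T x) ∂μ
        = ∫ x in K, ∑ i, Set.indicator (T ⁻¹' {y i}) (fun _ => ψ i) x ∂μ := by
          exact integral_congr_ae (Filter.Eventually.of_forall fun x => this x)
      _ = ∑ i, ∫ x in K, Set.indicator (T ⁻¹' {y i}) (fun _ => ψ i) x ∂μ := by
          refine integral_finset_sum _ fun i _ => ?_
          exact (integrable_const (ψ i)).indicator (hTmeas (measurableSet_singleton _))
      _ = ∑ i, ψ i * ν i := by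
          refine Finset.sum_congr rfl fun i _ => ?_
          rw [integral_indicator (hTmeas (measurableSet_singleton _)), setIntegral_const, measureReal_def,
            Measure.restrict_apply (hTmeas (measurableSet_singleton _)), Set.inter_comm,
            smul_eq_mul, hT i, mul_comm]
  have hITψ : ∫ x in K, φ (Tψ x) ∂μ = ∑ i, ψ i * ν i := by
    have hcong : (fun x => φ (Tψ x)) =ᵐ[μ.restrict K]
        fun x => ∑ i, Set.indicator (A i) (fun _ => ψ i) x := by
      filter_upwards [haeG] with x hxG
      obtain ⟨i, hxA⟩ := hxG
      rw [hTψ i x hxA, hφ i, Finset.sum_eq_single i]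
      · simp [Set.indicator, hxA]
      · intro j _ hji
        have hxj : x ∉ A j := fun hxAj =>
          Set.disjoint_left.1 (hAdisj (Ne.symm hji)) hxA hxAj
        simp [Set.indicator, hxj]
      · simp
    calc ∫ x in K, φ (Tψ x) ∂μ
        = ∫ x in K, ∑ i, Set.indicator (A i) (fun _ => ψ i) x ∂μ := integral_congr_ae hcong
      _ = ∑ i, ∫ x in K, Set.indicator (A i) (fun _ => ψ i) x ∂μ := by
          refine integral_finset_sum _ fun i _ => ?_
          exact (integrable_const (ψ i)).indicator (hAm i)
      _ = ∑ i, ψ i * ν i := by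
          refine Finset.sum_congr rfl fun i _ => ?_
          rw [integral_indicator (hAm i), setIntegral_const, measureReal_def,
            Measure.restrict_apply (hAm i),
            Set.inter_eq_self_of_subset_left (hAsubK i), hμA i, smul_eq_mul,
            hmass i, mul_comm]
  rw [hIT, hITψ] at hle
  linarith
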